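/- If ẑ is a real root of h, then h is differentiable at ẑ and h′(ẑ) = −d + (1 − d²·ẑ²)·ψ′(ẑ) = −D(ẑ), where D(z) = −5·c₃·z⁶ + (c₂ + 4·a·kₛ)·z⁴ − c₁·z² − c₀. -/

import Mathlib

lemma tanh_hasDerivAt (x : ℝ) : HasDerivAt Real.tanh (1 - Real.tanh x ^ 2) x := by
  have hc : Real.cosh x ≠ 0 := ne_of_gt (Real.cosh_pos x)
  have h := (Real.hasDerivAt_sinh x).div (Real.hasDerivAt_cosh x) hc
  have heq : Real.tanh = Real.sinh / Real.cosh :=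
    funext fun x => Real.tanh_eq_sinh_div_cosh x
  rw [← heq] at h
  refine h.congr_deriv ?_
  rw [Real.tanh_eq_sinh_div_cosh]
  have h1 : Real.cosh x ^ 2 - Real.sinh x ^ 2 = 1 := Real.cosh_sq_sub_sinh_sq x
  field_simp

theorem snod_h_deriv_at_root
    (a d k ks ε μ0 b : ℝ)
    (ha : 0 < a) (hd : 0 < d) (hk : 0 < k) (hks : 0 < ks) (hε : 0 < ε) (hμ0 : 0 < μ0)
    (c3 c2 c1 c0 : ℝ)
    (hc3 : c3 = a * d ^ 2 * ks) (hc2 : c2 = 3 * a * d ^ 2 * k + a * ks)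
    (hc1 : c1 = 3 * a * k - a * d ^ 2 * μ0) (hc0 : c0 = a * μ0 - d)
    (ψ h : ℝ → ℝ)
    (hψ : ψ = fun z => a * z * (-ks * z ^ 4 + k * z ^ 2 + μ0) + b)
    (hh : h = fun z => -d * z + Real.tanh (ψ z))
    (zhat : ℝ) (hroot : h zhat = 0) :
    DifferentiableAt ℝ h zhat ∧
      deriv h zhat = -d + (1 - d ^ 2 * zhat ^ 2) * deriv ψ zhat ∧
      deriv h zhat =
        -(-5 * c3 * zhat ^ 6 + (c2 + 4 * a * ks) * zhat ^ 4 - c1 * zhat ^ 2 - c0) := by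
  -- derivative of ψ
  have hψd : ∀ z : ℝ, HasDerivAt ψ (a * μ0 + 3 * a * k * z ^ 2 - 5 * a * ks * z ^ 4) z := by
    intro z
    rw [hψ]
    have h1 : HasDerivAt (fun z : ℝ => a * z * (-ks * z ^ 4 + k * z ^ 2 + μ0) + b)
        (a * 1 * (-ks * z ^ 4 + k * z ^ 2 + μ0)
          + a * z * (-ks * (4 * z ^ 3) + k * (2 * z ^ 1) + 0)) z := by
      have := ((((hasDerivAt_id z).const_mul a).mul
        ((((hasDerivAt_pow 4 z).const_mul (-ks)).add
          ((hasDerivAt_pow 2 z).const_mul k)).add_const μ0))).add_const b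
      simp only [id] at this
      refine this.congr_deriv ?_
      norm_num
    convert h1 using 1
    ring
  have htanh : Real.tanh (ψ zhat) = d * zhat := by
    have : -d * zhat + Real.tanh (ψ zhat) = 0 := by rw [hh] at hroot; exact hroot
    linarith
  have hhd : HasDerivAt h (-d + (1 - d ^ 2 * zhat ^ 2) *
      (a * μ0 + 3 * a * k * zhat ^ 2 - 5 * a * ks * zhat ^ 4)) zhat := by
    rw [hh]
    have hcomp := (tanh_hasDerivAt (ψ zhat)).comp zhat (hψd zhat)
    have hlin : HasDerivAt (fun z : ℝ => -d * z) (-d) zhat := by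
      simpa using (hasDerivAt_id zhat).const_mul (-d)
    have := hlin.add hcomp
    refine this.congr_deriv ?_
    rw [htanh]
    ring
  refine ⟨hhd.differentiableAt, ?_, ?_⟩
  · rw [hhd.deriv, (hψd zhat).deriv]
  · rw [hhd.deriv, hc3, hc2, hc1, hc0]
    ring
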